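/- Let m, n ≥ 1 and let μ_1, μ_2 be locally valid MV assignments of the square grid crease pattern G_{m,n}. Then there is a finite sequence of single face flips transforming μ_1 into μ_2 in which every intermediate MV assignment is locally valid; that is, the origami flip graph of G_{m,n} is connected. -/

import Mathlib

/-- A crease edge of the `m × n` square grid crease pattern: a vertical crease
`V i j` between faces `(i,j)` and `(i+1,j)`, or a horizontal crease `H i j`
between faces `(i,j)` and `(i,j+1)`. -/
inductive Crease (m n : ℕ) : Type where
  | V : (i j : ℕ) → i + 1 < m → j < n → Crease m n
  | H : (i j : ℕ) → i < m → j + 1 < n → Crease m n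

/-- The face `F` borders the crease `e`. -/
def Borders {m n : ℕ} (F : ℕ × ℕ) : Crease m n → Prop
  | .V i j _ _ => F = (i, j) ∨ F = (i + 1, j)
  | .H i j _ _ => F = (i, j) ∨ F = (i, j + 1)

instance {m n : ℕ} (F : ℕ × ℕ) (e : Crease m n) : Decidable (Borders F e) :=
  match e with
  | .V i j _ _ => inferInstanceAs (Decidable (F = (i, j) ∨ F = (i + 1, j)))
  | .H i j _ _ => inferInstanceAs (Decidable (F = (i, j) ∨ F = (i, j + 1)))

/-- A mountain-valley assignment takes values in `{-1, 1}`. -/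
def IsMV {m n : ℕ} (μ : Crease m n → ℤ) : Prop :=
  ∀ e, μ e = 1 ∨ μ e = -1

/-- Local validity: at every interior vertex `(a+1, b+1)` the sum of `μ` over the four
incident crease edges is `2` or `-2`. -/
def LocallyValid {m n : ℕ} (μ : Crease m n → ℤ) : Prop :=
  ∀ a b : ℕ, ∀ ha : a + 1 < m, ∀ hb : b + 1 < n,
    μ (.V a b ha (by omega)) + μ (.V a (b + 1) ha hb) +
      μ (.H a b (by omega) hb) + μ (.H (a + 1) b ha hb) = 2 ∨
    μ (.V a b ha (by omega)) + μ (.V a (b + 1) ha hb) +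
      μ (.H a b (by omega) hb) + μ (.H (a + 1) b ha hb) = -2

/-- The face faceFlip of `μ` at the face `F`. -/
def faceFlip {m n : ℕ} (μ : Crease m n → ℤ) (F : ℕ × ℕ) (e : Crease m n) : ℤ :=
  if Borders F e then -μ e else μ e

/-- The faces of the `m × n` square grid. -/
def Faces (m n : ℕ) : Finset (ℕ × ℕ) := Finset.range m ×ˢ Finset.range n

/-- Applying the face flips of a list of faces in succession, starting from `μ`. -/
def flipSeq {m n : ℕ} (μ : Crease m n → ℤ) (L : List (ℕ × ℕ)) : Crease m n → ℤ :=
  L.foldl (fun ν F => faceFlip ν F) μ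

/- ## Auxiliary machinery -/

/-- total vertical crease value -/
def vvv {m n : ℕ} (μ : Crease m n → ℤ) (i j : ℕ) : ℤ :=
  if h : i + 1 < m ∧ j < n then μ (.V i j h.1 h.2) else 1

/-- total horizontal crease value -/
def hhh {m n : ℕ} (μ : Crease m n → ℤ) (i j : ℕ) : ℤ :=
  if h : i < m ∧ j + 1 < n then μ (.H i j h.1 h.2) else 1

lemma vvv_eq {m n : ℕ} (μ : Crease m n → ℤ) {i j : ℕ} (h1 : i + 1 < m) (h2 : j < n) :
    vvv μ i j = μ (.V i j h1 h2) := dif_pos ⟨h1, h2⟩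

lemma hhh_eq {m n : ℕ} (μ : Crease m n → ℤ) {i j : ℕ} (h1 : i < m) (h2 : j + 1 < n) :
    hhh μ i j = μ (.H i j h1 h2) := dif_pos ⟨h1, h2⟩

lemma vvv_mv {m n : ℕ} {μ : Crease m n → ℤ} (hmv : IsMV μ) (i j : ℕ) :
    vvv μ i j = 1 ∨ vvv μ i j = -1 := by
  unfold vvv; split
  · exact hmv _
  · exact Or.inl rfl

lemma hhh_mv {m n : ℕ} {μ : Crease m n → ℤ} (hmv : IsMV μ) (i j : ℕ) :
    hhh μ i j = 1 ∨ hhh μ i j = -1 := by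
  unfold hhh; split
  · exact hmv _
  · exact Or.inl rfl

/-- the potential on faces -/
def pot {m n : ℕ} (μ₁ μ₂ : Crease m n → ℤ) : ℕ → ℕ → ℤ
  | 0, 0 => 1
  | i+1, 0 => pot μ₁ μ₂ i 0 * (vvv μ₁ i 0 * vvv μ₂ i 0)
  | i, j+1 => pot μ₁ μ₂ i j * (hhh μ₁ i j * hhh μ₂ i j)
  termination_by i j => (i, j)

lemma pot_mv {m n : ℕ} {μ₁ μ₂ : Crease m n → ℤ} (h1 : IsMV μ₁) (h2 : IsMV μ₂) :
    ∀ i j, pot μ₁ μ₂ i j = 1 ∨ pot μ₁ μ₂ i j = -1 := by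
  intro i j
  induction i, j using pot.induct with
  | case1 => left; rw [pot]
  | case2 i ih =>
      rw [pot]
      rcases ih with h|h <;> rcases vvv_mv h1 i 0 with a|a <;> rcases vvv_mv h2 i 0 with b|b <;>
        rw [h, a, b] <;> norm_num
  | case3 i j ih =>
      rw [pot]
      rcases ih with h|h <;> rcases hhh_mv h1 i j with a|a <;> rcases hhh_mv h2 i j with b|b <;>
        rw [h, a, b] <;> norm_num

lemma pot_sq {m n : ℕ} {μ₁ μ₂ : Crease m n → ℤ} (h1 : IsMV μ₁) (h2 : IsMV μ₂) (i j : ℕ) :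
    pot μ₁ μ₂ i j * pot μ₁ μ₂ i j = 1 := by
  rcases pot_mv h1 h2 i j with h|h <;> rw [h] <;> norm_num

lemma prodNegOne {x y z w : ℤ} (hx : x = 1 ∨ x = -1) (hy : y = 1 ∨ y = -1)
    (hz : z = 1 ∨ z = -1) (hw : w = 1 ∨ w = -1)
    (hs : x + y + z + w = 2 ∨ x + y + z + w = -2) :
    x * y * z * w = -1 := by
  rcases hx with rfl|rfl <;> rcases hy with rfl|rfl <;> rcases hz with rfl|rfl <;>
    rcases hw with rfl|rfl <;> omega

/-- the vertex relation for a single valid MV assignment -/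
lemma vertexRel {m n : ℕ} {μ : Crease m n → ℤ} (hmv : IsMV μ) (hval : LocallyValid μ)
    {a b : ℕ} (ha : a + 1 < m) (hb : b + 1 < n) :
    vvv μ a b * vvv μ a (b+1) * hhh μ a b * hhh μ (a+1) b = -1 := by
  apply prodNegOne (vvv_mv hmv a b) (vvv_mv hmv a (b+1)) (hhh_mv hmv a b) (hhh_mv hmv (a+1) b)
  rw [vvv_eq μ ha (by omega), vvv_eq μ ha hb, hhh_eq μ (by omega) hb, hhh_eq μ ha hb]
  exact hval a b ha hb

lemma sq_of_mv {x : ℤ} (h : x = 1 ∨ x = -1) : x * x = 1 := by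
  rcases h with rfl|rfl <;> norm_num

/-- horizontal potential equation -/
lemma potH {m n : ℕ} {μ₁ μ₂ : Crease m n → ℤ} (h1 : IsMV μ₁) (h2 : IsMV μ₂) (i j : ℕ) :
    pot μ₁ μ₂ i j * pot μ₁ μ₂ i (j+1) = hhh μ₁ i j * hhh μ₂ i j := by
  have e : pot μ₁ μ₂ i (j+1) = pot μ₁ μ₂ i j * (hhh μ₁ i j * hhh μ₂ i j) := by rw [pot]
  rw [e, ← mul_assoc, pot_sq h1 h2, one_mul]

/-- vertical potential equation -/
lemma potV {m n : ℕ} {μ₁ μ₂ : Crease m n → ℤ} (h1 : IsMV μ₁) (h2 : IsMV μ₂)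
    (hv1 : LocallyValid μ₁) (hv2 : LocallyValid μ₂) (i : ℕ) :
    ∀ j, i + 1 < m → j < n →
      pot μ₁ μ₂ i j * pot μ₁ μ₂ (i+1) j = vvv μ₁ i j * vvv μ₂ i j := by
  intro j
  induction j with
  | zero =>
      intro ha _
      have e : pot μ₁ μ₂ (i+1) 0 = pot μ₁ μ₂ i 0 * (vvv μ₁ i 0 * vvv μ₂ i 0) := by rw [pot]
      rw [e, ← mul_assoc, pot_sq h1 h2, one_mul]
  | succ j ih =>
      intro ha hb
      have IH := ih ha (by omega)
      have r1 := vertexRel h1 hv1 ha hb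
      have r2 := vertexRel h2 hv2 ha hb
      have sb1 := sq_of_mv (vvv_mv h1 i (j+1))
      have sb2 := sq_of_mv (vvv_mv h2 i (j+1))
      have e1 : vvv μ₁ i j * hhh μ₁ i j * hhh μ₁ (i+1) j = - vvv μ₁ i (j+1) := by
        linear_combination (vvv μ₁ i (j+1)) * r1 -
          (vvv μ₁ i j * hhh μ₁ i j * hhh μ₁ (i+1) j) * sb1
      have e2 : vvv μ₂ i j * hhh μ₂ i j * hhh μ₂ (i+1) j = - vvv μ₂ i (j+1) := by
        linear_combination (vvv μ₂ i (j+1)) * r2 -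
          (vvv μ₂ i j * hhh μ₂ i j * hhh μ₂ (i+1) j) * sb2
      have p1 : pot μ₁ μ₂ i (j+1) = pot μ₁ μ₂ i j * (hhh μ₁ i j * hhh μ₂ i j) := by rw [pot]
      have p2 : pot μ₁ μ₂ (i+1) (j+1) = pot μ₁ μ₂ (i+1) j * (hhh μ₁ (i+1) j * hhh μ₂ (i+1) j) := by
        rw [pot]
      calc pot μ₁ μ₂ i (j+1) * pot μ₁ μ₂ (i+1) (j+1)
          = (pot μ₁ μ₂ i j * pot μ₁ μ₂ (i+1) j) *
            (hhh μ₁ i j * hhh μ₂ i j * (hhh μ₁ (i+1) j * hhh μ₂ (i+1) j)) := by rw [p1, p2]; ring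
        _ = (vvv μ₁ i j * hhh μ₁ i j * hhh μ₁ (i+1) j) *
            (vvv μ₂ i j * hhh μ₂ i j * hhh μ₂ (i+1) j) := by rw [IH]; ring
        _ = (- vvv μ₁ i (j+1)) * (- vvv μ₂ i (j+1)) := by rw [e1, e2]
        _ = vvv μ₁ i (j+1) * vvv μ₂ i (j+1) := by ring

/- ## flipSeq formula -/

lemma flipSeq_apply {m n : ℕ} :
    ∀ (L : List (ℕ × ℕ)) (μ : Crease m n → ℤ) (e : Crease m n),
      flipSeq μ L e = (L.map (fun F => if Borders F e then (-1:ℤ) else 1)).prod * μ e := by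
  intro L
  induction L with
  | nil => intro μ e; simp [flipSeq]
  | cons F L ih =>
      intro μ e
      have : flipSeq μ (F :: L) = flipSeq (faceFlip μ F) L := rfl
      rw [this, ih]
      simp only [List.map_cons, List.prod_cons, faceFlip]
      split_ifs <;> ring

/- ## Preservation of validity under any face flip -/

lemma isMV_faceFlip {m n : ℕ} {μ : Crease m n → ℤ} (hmv : IsMV μ) (F : ℕ × ℕ) :
    IsMV (faceFlip μ F) := by
  intro e
  unfold faceFlip
  rcases hmv e with h|h <;> rw [h] <;> split_ifs <;> norm_num

def LV' {m n : ℕ} (μ : Crease m n → ℤ) : Prop :=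
  ∀ a b : ℕ, a + 1 < m → b + 1 < n →
    vvv μ a b + vvv μ a (b+1) + hhh μ a b + hhh μ (a+1) b = 2 ∨
    vvv μ a b + vvv μ a (b+1) + hhh μ a b + hhh μ (a+1) b = -2

lemma lv'_iff {m n : ℕ} {μ : Crease m n → ℤ} : LocallyValid μ ↔ LV' μ := by
  constructor
  · intro h a b ha hb
    rw [vvv_eq μ ha (by omega), vvv_eq μ ha hb, hhh_eq μ (by omega) hb, hhh_eq μ ha hb]
    exact h a b ha hb
  · intro h a b ha hb
    have H := h a b ha hb
    rw [vvv_eq μ ha (by omega), vvv_eq μ ha hb, hhh_eq μ (by omega) hb, hhh_eq μ ha hb] at H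
    exact H

lemma vvv_faceFlip {m n : ℕ} (μ : Crease m n → ℤ) (F : ℕ × ℕ) (i j : ℕ) :
    vvv (faceFlip μ F) i j
      = (if (F = (i, j) ∨ F = (i+1, j)) ∧ (i + 1 < m ∧ j < n) then -1 else 1) * vvv μ i j := by
  by_cases h : i + 1 < m ∧ j < n
  · unfold vvv
    rw [dif_pos h, dif_pos h]
    unfold faceFlip
    show (if (F = (i, j) ∨ F = (i+1, j)) then -μ (Crease.V i j h.1 h.2)
      else μ (Crease.V i j h.1 h.2)) = _
    simp only [and_iff_left h]
    split_ifs <;> ring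
  · unfold vvv
    rw [dif_neg h, dif_neg h]
    rw [if_neg (fun c => h c.2), one_mul]

lemma hhh_faceFlip {m n : ℕ} (μ : Crease m n → ℤ) (F : ℕ × ℕ) (i j : ℕ) :
    hhh (faceFlip μ F) i j
      = (if (F = (i, j) ∨ F = (i, j+1)) ∧ (i < m ∧ j + 1 < n) then -1 else 1) * hhh μ i j := by
  by_cases h : i < m ∧ j + 1 < n
  · unfold hhh
    rw [dif_pos h, dif_pos h]
    unfold faceFlip
    show (if (F = (i, j) ∨ F = (i, j+1)) then -μ (Crease.H i j h.1 h.2)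
      else μ (Crease.H i j h.1 h.2)) = _
    simp only [and_iff_left h]
    split_ifs <;> ring
  · unfold hhh
    rw [dif_neg h, dif_neg h]
    rw [if_neg (fun c => h c.2), one_mul]

lemma pair_ne_fst {a b c d : ℕ} (h : a ≠ c) : (a, b) ≠ (c, d) := by
  intro e; injection e with e1 e2; exact h e1

lemma pair_ne_snd {a b c d : ℕ} (h : b ≠ d) : (a, b) ≠ (c, d) := by
  intro e; injection e with e1 e2; exact h e2

lemma not_cond {P Q R : Prop} (h1 : ¬P) (h2 : ¬Q) : ¬((P ∨ Q) ∧ R) :=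
  fun c => c.1.elim h1 h2

lemma lv'_faceFlip {m n : ℕ} {μ : Crease m n → ℤ} (hmv : IsMV μ)
    (hval : LV' μ) (F : ℕ × ℕ) : LV' (faceFlip μ F) := by
  intro a b ha hb
  have H := hval a b ha hb
  have h1 := vvv_mv hmv a b
  have h2 := vvv_mv hmv a (b+1)
  have h3 := hhh_mv hmv a b
  have h4 := hhh_mv hmv (a+1) b
  have ha' : a < m := by omega
  have hb' : b < n := by omega
  rw [vvv_faceFlip, vvv_faceFlip, hhh_faceFlip, hhh_faceFlip]
  rcases Classical.em (F = (a, b)) with h|n1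
  · subst h
    rw [if_pos ⟨Or.inl rfl, ha, hb'⟩,
      if_neg (not_cond (pair_ne_snd (by omega)) (pair_ne_fst (by omega))),
      if_pos ⟨Or.inl rfl, ha', hb⟩,
      if_neg (not_cond (pair_ne_fst (by omega)) (pair_ne_fst (by omega)))]
    omega
  rcases Classical.em (F = (a+1, b)) with h|n2
  · subst h
    rw [if_pos ⟨Or.inr rfl, ha, hb'⟩,
      if_neg (not_cond (pair_ne_fst (by omega)) (pair_ne_snd (by omega))),
      if_neg (not_cond (pair_ne_fst (by omega)) (pair_ne_fst (by omega))),
      if_pos ⟨Or.inl rfl, ha, hb⟩]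
    omega
  rcases Classical.em (F = (a, b+1)) with h|n3
  · subst h
    rw [if_neg (not_cond (pair_ne_snd (by omega)) (pair_ne_fst (by omega))),
      if_pos ⟨Or.inl rfl, ha, hb⟩,
      if_pos ⟨Or.inr rfl, ha', hb⟩,
      if_neg (not_cond (pair_ne_fst (by omega)) (pair_ne_fst (by omega)))]
    omega
  rcases Classical.em (F = (a+1, b+1)) with h|n4
  · subst h
    rw [if_neg (not_cond (pair_ne_fst (by omega)) (pair_ne_snd (by omega))),
      if_pos ⟨Or.inr rfl, ha, hb⟩,
      if_neg (not_cond (pair_ne_fst (by omega)) (pair_ne_fst (by omega))),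
      if_pos ⟨Or.inr rfl, ha, hb⟩]
    omega
  · rw [if_neg (not_cond n1 n2), if_neg (not_cond n3 n4),
      if_neg (not_cond n1 n3), if_neg (not_cond n2 n4)]
    omega

lemma locallyValid_faceFlip {m n : ℕ} {μ : Crease m n → ℤ} (hmv : IsMV μ)
    (hval : LocallyValid μ) (F : ℕ × ℕ) : LocallyValid (faceFlip μ F) :=
  lv'_iff.2 (lv'_faceFlip hmv (lv'_iff.1 hval) F)

lemma flipSeq_preserves {m n : ℕ} :
    ∀ (L : List (ℕ × ℕ)) (μ : Crease m n → ℤ), IsMV μ → LocallyValid μ →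
      IsMV (flipSeq μ L) ∧ LocallyValid (flipSeq μ L) := by
  intro L
  induction L with
  | nil => intro μ h1 h2; exact ⟨h1, h2⟩
  | cons F L ih =>
      intro μ h1 h2
      exact ih (faceFlip μ F) (isMV_faceFlip h1 F) (locallyValid_faceFlip h1 h2 F)

lemma mem_Faces {m n : ℕ} {i j : ℕ} : (i, j) ∈ Faces m n ↔ i < m ∧ j < n := by
  simp [Faces]

/-- Any two locally valid MV assignments of the square grid are connected by a finite
sequence of single face flips all of whose intermediate MV assignments are locally
valid: the origami flip graph of the square grid is connected. -/
theorem square_grid_flip_graph_connected (m n : ℕ) (hm : 1 ≤ m) (hn : 1 ≤ n)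
    (μ₁ μ₂ : Crease m n → ℤ) (hmv₁ : IsMV μ₁) (hmv₂ : IsMV μ₂)
    (hval₁ : LocallyValid μ₁) (hval₂ : LocallyValid μ₂) :
    ∃ L : List (ℕ × ℕ), (∀ F ∈ L, F ∈ Faces m n) ∧
      flipSeq μ₁ L = μ₂ ∧
      ∀ k ≤ L.length,
        IsMV (flipSeq μ₁ (L.take k)) ∧ LocallyValid (flipSeq μ₁ (L.take k)) := by
  classical
  set S : Finset (ℕ × ℕ) := (Faces m n).filter (fun F => pot μ₁ μ₂ F.1 F.2 = -1) with hS
  refine ⟨S.toList, ?_, ?_, ?_⟩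
  · intro F hF
    rw [Finset.mem_toList, hS, Finset.mem_filter] at hF
    exact hF.1
  · -- the main computation
    funext e
    rw [flipSeq_apply]
    have key : (S.toList.map (fun F => if Borders F e then (-1:ℤ) else 1)).prod
        = μ₁ e * μ₂ e := by
      rw [Finset.prod_map_toList]
      rw [hS, Finset.prod_filter]
      have step : ∀ F ∈ Faces m n,
          (if pot μ₁ μ₂ F.1 F.2 = -1 then (if Borders F e then (-1:ℤ) else 1) else 1)
          = (if Borders F e then pot μ₁ μ₂ F.1 F.2 else 1) := by
        intro F _
        rcases pot_mv hmv₁ hmv₂ F.1 F.2 with h|h <;> rw [h] <;> simp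
      rw [Finset.prod_congr rfl step]
      cases e with
      | V i j h1 h2 =>
          have hne : ((i:ℕ), j) ≠ (i+1, j) := by simp
          have split2 : ∀ F : ℕ × ℕ,
              (if Borders F (Crease.V i j h1 h2 : Crease m n) then pot μ₁ μ₂ F.1 F.2 else 1)
              = (if F = (i, j) then pot μ₁ μ₂ F.1 F.2 else 1) *
                (if F = (i+1, j) then pot μ₁ μ₂ F.1 F.2 else 1) := by
            intro F
            show (if (F = (i, j) ∨ F = (i+1, j)) then pot μ₁ μ₂ F.1 F.2 else 1) = _
            rcases Classical.em (F = (i, j)) with hB|hB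
            · subst hB
              rw [if_pos (Or.inl rfl), if_pos rfl, if_neg (by simp), mul_one]
            · rcases Classical.em (F = (i+1, j)) with hC|hC
              · subst hC
                rw [if_pos (Or.inr rfl), if_neg hB, if_pos rfl, one_mul]
              · rw [if_neg (by tauto), if_neg hB, if_neg hC, mul_one]
          rw [Finset.prod_congr rfl (fun F _ => split2 F), Finset.prod_mul_distrib,
            Finset.prod_ite_eq', Finset.prod_ite_eq']
          rw [if_pos (mem_Faces.mpr ⟨by omega, h2⟩), if_pos (mem_Faces.mpr ⟨by omega, h2⟩)]
          have := potV hmv₁ hmv₂ hval₁ hval₂ i j h1 h2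
          rw [vvv_eq μ₁ h1 h2, vvv_eq μ₂ h1 h2] at this
          exact this
      | H i j h1 h2 =>
          have split2 : ∀ F : ℕ × ℕ,
              (if Borders F (Crease.H i j h1 h2 : Crease m n) then pot μ₁ μ₂ F.1 F.2 else 1)
              = (if F = (i, j) then pot μ₁ μ₂ F.1 F.2 else 1) *
                (if F = (i, j+1) then pot μ₁ μ₂ F.1 F.2 else 1) := by
            intro F
            show (if (F = (i, j) ∨ F = (i, j+1)) then pot μ₁ μ₂ F.1 F.2 else 1) = _
            rcases Classical.em (F = (i, j)) with hB|hB
            · subst hB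
              rw [if_pos (Or.inl rfl), if_pos rfl, if_neg (by simp), mul_one]
            · rcases Classical.em (F = (i, j+1)) with hC|hC
              · subst hC
                rw [if_pos (Or.inr rfl), if_neg hB, if_pos rfl, one_mul]
              · rw [if_neg (by tauto), if_neg hB, if_neg hC, mul_one]
          rw [Finset.prod_congr rfl (fun F _ => split2 F), Finset.prod_mul_distrib,
            Finset.prod_ite_eq', Finset.prod_ite_eq']
          rw [if_pos (mem_Faces.mpr ⟨h1, by omega⟩), if_pos (mem_Faces.mpr ⟨h1, by omega⟩)]
          have := potH hmv₁ hmv₂ i j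
          rw [hhh_eq μ₁ h1 h2, hhh_eq μ₂ h1 h2] at this
          exact this
    rw [key]
    rcases hmv₁ e with h|h <;> rw [h] <;> ring
  · intro k _
    exact flipSeq_preserves (S.toList.take k) μ₁ hmv₁ hval₁
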